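/- arXiv:0709.2983 — 3 statements merged into one kernel-verified Lean document; each statement's English description precedes it below -/
import Mathlib

section
/- Suppose $(Y_t)_{t\in\mathbb{Z}}$ is a stationary process of nonnegative random vectors in $\mathbb{R}^n$ with finite expectation satisfying $Y_t = A_t Y_{t-1} + B_t$ a.s., where $(A_t)$ are i.i.d. nonnegative random matrices independent of past $Y$'s and $(B_t)$ are i.i.d. nonnegative random vectors (with the independence structure of the PGARCH state-space representation), and suppose $E[B_0]$ has all coordinates strictly positive in the coordinates generated by the companion structure. Then $\sum_{k=0}^{\infty} (E[A_0])^k E[B_0] < +\infty$ componentwise, and consequently $(E[A_0])^k E[B_0] \to 0$ as $k\to\infty$. -/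
open MeasureTheory ProbabilityTheory Matrix Filter Topology

/-- Matrices carry the product (Borel) measurable structure. -/
instance matrixMeasurableSpace {m n : Type*} {α : Type*} [MeasurableSpace α] :
    MeasurableSpace (Matrix m n α) :=
  (inferInstance : MeasurableSpace (m → n → α))

/-- `prodA A t ω k = A_t(ω) A_{t-1}(ω) ⋯ A_{t-k+1}(ω)` (`k` factors); the empty product is
the identity. -/
noncomputable def prodA {n : ℕ} {Ω : Type*} (A : ℤ → Ω → Matrix (Fin n) (Fin n) ℝ)
    (t : ℤ) (ω : Ω) : ℕ → Matrix (Fin n) (Fin n) ℝ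
  | 0 => 1
  | k + 1 => prodA A t ω k * A (t - k) ω

/-- The (entrywise) mean matrix `Ā = E[A₀]`. -/
noncomputable def matMean {n : ℕ} {Ω : Type*} [MeasurableSpace Ω] (μ : Measure Ω)
    (A0 : Ω → Matrix (Fin n) (Fin n) ℝ) : Matrix (Fin n) (Fin n) ℝ :=
  Matrix.of fun i j => ∫ ω, A0 ω i j ∂μ

/-- The mean vector `B̄ = E[B₀]`. -/
noncomputable def vecMean {n : ℕ} {Ω : Type*} [MeasurableSpace Ω] (μ : Measure Ω)
    (B0 : Ω → Fin n → ℝ) : Fin n → ℝ :=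
  fun i => ∫ ω, B0 ω i ∂μ

/-- `ρ(M) < 1`: every (complex) eigenvalue of the real matrix `M` has modulus `< 1`. -/
def specLtOne {n : ℕ} (M : Matrix (Fin n) (Fin n) ℝ) : Prop :=
  ∀ z ∈ spectrum ℂ (M.map (algebraMap ℝ ℂ)), ‖z‖ < 1

section Aux

variable {n : ℕ} {Ω : Type*}

lemma measurable_mat_entry {α : Type*} [MeasurableSpace α]
    {f : α → Matrix (Fin n) (Fin n) ℝ} (hf : Measurable f) (i j : Fin n) :
    Measurable fun a => f a i j :=
  (measurable_pi_apply j).comp ((measurable_pi_apply i).comp hf)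

lemma Measurable.matrixMul {α : Type*} [MeasurableSpace α]
    {f g : α → Matrix (Fin n) (Fin n) ℝ} (hf : Measurable f) (hg : Measurable g) :
    Measurable fun a => f a * g a := by
  refine measurable_pi_iff.mpr ?_; intro i; refine measurable_pi_iff.mpr ?_; intro j
  have : (fun a => (f a * g a) i j) = fun a => ∑ l, f a i l * g a l j := by
    funext a; simp [Matrix.mul_apply]
  rw [this]
  exact Finset.measurable_sum _ fun l _ =>
    (measurable_mat_entry hf i l).mul (measurable_mat_entry hg l j)

lemma Measurable.matrixMulVec {α : Type*} [MeasurableSpace α]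
    {f : α → Matrix (Fin n) (Fin n) ℝ} {g : α → Fin n → ℝ}
    (hf : Measurable f) (hg : Measurable g) :
    Measurable fun a => f a *ᵥ g a := by
  rw [measurable_pi_iff]; intro i
  have : (fun a => (f a *ᵥ g a) i) = fun a => ∑ l, f a i l * g a l := by
    funext a; simp [Matrix.mulVec, dotProduct]
  rw [this]
  exact Finset.measurable_sum _ fun l _ =>
    (measurable_mat_entry hf i l).mul ((measurable_pi_apply l).comp hg)

lemma prodA_succ_left (A : ℤ → Ω → Matrix (Fin n) (Fin n) ℝ) (t : ℤ) (ω : Ω) (k : ℕ) :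
    prodA A t ω (k + 1) = A t ω * prodA A (t - 1) ω k := by
  induction k with
  | zero => simp [prodA]
  | succ k ih =>
    have hc : (t - (↑(k + 1) : ℤ)) = (t - 1) - (k : ℤ) := by push_cast; ring
    calc prodA A t ω (k + 2) = prodA A t ω (k + 1) * A (t - (↑(k + 1) : ℤ)) ω := rfl
      _ = (A t ω * prodA A (t - 1) ω k) * A ((t - 1) - (k : ℤ)) ω := by rw [ih, hc]
      _ = A t ω * prodA A (t - 1) ω (k + 1) := by rw [mul_assoc]; rfl

lemma prodA_congr {Ω' : Type*} {A : ℤ → Ω → Matrix (Fin n) (Fin n) ℝ}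
    {A' : ℤ → Ω' → Matrix (Fin n) (Fin n) ℝ} {t : ℤ} {ω : Ω} {ω' : Ω'} {k : ℕ}
    (h : ∀ m : ℕ, m < k → A (t - m) ω = A' (t - m) ω') :
    prodA A t ω k = prodA A' t ω' k := by
  induction k with
  | zero => rfl
  | succ k ih =>
    show prodA A t ω k * A (t - k) ω = prodA A' t ω' k * A' (t - k) ω'
    rw [ih (fun m hm => h m (hm.trans (Nat.lt_succ_self k))), h k (Nat.lt_succ_self k)]

lemma measurable_prodA {A : ℤ → Ω → Matrix (Fin n) (Fin n) ℝ} [MeasurableSpace Ω]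
    (hA : ∀ s, Measurable (A s)) (t : ℤ) (k : ℕ) :
    Measurable fun ω => prodA A t ω k := by
  induction k with
  | zero => exact measurable_const
  | succ k ih => exact Measurable.matrixMul ih (hA _)

end Aux

/-- The iterated term `Z t k ω = A_t ⋯ A_{t-k+1} B_{t-k}`. -/
noncomputable def Zfun {n : ℕ} {Ω : Type*} (A : ℤ → Ω → Matrix (Fin n) (Fin n) ℝ)
    (B : ℤ → Ω → Fin n → ℝ) (t : ℤ) (k : ℕ) (ω : Ω) : Fin n → ℝ :=
  prodA A t ω k *ᵥ B (t - k) ω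

lemma Zfun_zero {n : ℕ} {Ω : Type*} (A : ℤ → Ω → Matrix (Fin n) (Fin n) ℝ)
    (B : ℤ → Ω → Fin n → ℝ) (t : ℤ) (ω : Ω) : Zfun A B t 0 ω = B t ω := by
  simp [Zfun, prodA, Matrix.one_mulVec]

lemma Zfun_succ {n : ℕ} {Ω : Type*} (A : ℤ → Ω → Matrix (Fin n) (Fin n) ℝ)
    (B : ℤ → Ω → Fin n → ℝ) (t : ℤ) (k : ℕ) (ω : Ω) :
    Zfun A B t (k + 1) ω = A t ω *ᵥ Zfun A B (t - 1) k ω := by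
  have hc : (t - (↑(k + 1) : ℤ)) = (t - 1) - (k : ℤ) := by push_cast; ring
  rw [Zfun, Zfun, prodA_succ_left, hc, Matrix.mulVec_mulVec]


/-- If `(Y_t)` is a stationary `L¹` process of nonnegative random vectors
satisfying `Y_t = A_t Y_{t-1} + B_t` a.s. (with i.i.d. nonnegative pairs `(A_t, B_t)` and the
PGARCH independence structure) and `E[B₀]` has strictly positive coordinates, then
`∑_k (E[A₀])^k E[B₀] < ∞` componentwise, and consequently `(E[A₀])^k E[B₀] → 0`. -/
theorem stmt4 {n : ℕ} {Ω : Type*} [MeasurableSpace Ω] (μ : Measure Ω) [IsProbabilityMeasure μ]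
    (A : ℤ → Ω → Matrix (Fin n) (Fin n) ℝ) (B : ℤ → Ω → Fin n → ℝ)
    (hmeas : ∀ t, Measurable fun ω => (A t ω, B t ω))
    (hindep : iIndepFun (fun t ω => (A t ω, B t ω)) μ)
    (hident : ∀ t, Measure.map (fun ω => (A t ω, B t ω)) μ
      = Measure.map (fun ω => (A 0 ω, B 0 ω)) μ)
    (hApos : ∀ t, ∀ᵐ ω ∂μ, ∀ i j, 0 ≤ A t ω i j)
    (hBpos : ∀ t, ∀ᵐ ω ∂μ, ∀ i, 0 ≤ B t ω i)
    (hAint : ∀ i j, Integrable (fun ω => A 0 ω i j) μ)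
    (hBint : ∀ i, Integrable (fun ω => B 0 ω i) μ)
    (hBmean : ∀ i, 0 < vecMean μ (B 0) i)
    (Y : ℤ → Ω → Fin n → ℝ)
    (hYmeas : ∀ t, Measurable (Y t))
    (hYpos : ∀ t, ∀ᵐ ω ∂μ, ∀ i, 0 ≤ Y t ω i)
    (hYint : ∀ t i, Integrable (fun ω => Y t ω i) μ)
    (hYstat : ∀ t, Measure.map (Y t) μ = Measure.map (Y 0) μ)
    (hYrec : ∀ t, ∀ᵐ ω ∂μ, Y t ω = A t ω *ᵥ Y (t - 1) ω + B t ω) :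
    (∀ i, Summable fun k => (matMean μ (A 0) ^ k *ᵥ vecMean μ (B 0)) i) ∧
    Tendsto (fun k => matMean μ (A 0) ^ k *ᵥ vecMean μ (B 0)) atTop (𝓝 0) := by
  classical
  set Abar := matMean μ (A 0) with hAbar
  set Bbar := vecMean μ (B 0) with hBbar
  set f : ℤ → Ω → (Matrix (Fin n) (Fin n) ℝ × (Fin n → ℝ)) := fun t ω => (A t ω, B t ω)
    with hf
  have hAmeas : ∀ t, Measurable (A t) := fun t => measurable_fst.comp (hmeas t)
  have hBmeas : ∀ t, Measurable (B t) := fun t => measurable_snd.comp (hmeas t)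
  -- transfer of integrability and means via identical distribution
  have transfer : ∀ (g : Matrix (Fin n) (Fin n) ℝ × (Fin n → ℝ) → ℝ), Measurable g → ∀ t : ℤ,
      (Integrable (fun ω => g (f t ω)) μ ↔ Integrable (fun ω => g (f 0 ω)) μ)
      ∧ ∫ ω, g (f t ω) ∂μ = ∫ ω, g (f 0 ω) ∂μ := by
    intro g hg t
    constructor
    · have h1 := integrable_map_measure (μ := μ) hg.aestronglyMeasurable
        (hmeas t).aemeasurable
      have h2 := integrable_map_measure (μ := μ) hg.aestronglyMeasurable
        (hmeas 0).aemeasurable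
      rw [Function.comp_def] at h1 h2
      rw [← h1, ← h2, hident t]
    · rw [← integral_map (hmeas t).aemeasurable hg.aestronglyMeasurable,
        ← integral_map (hmeas 0).aemeasurable hg.aestronglyMeasurable, hident t]
  have hgA : ∀ i j, Measurable fun p : Matrix (Fin n) (Fin n) ℝ × (Fin n → ℝ) => p.1 i j :=
    fun i j => measurable_mat_entry measurable_fst i j
  have hgB : ∀ i, Measurable fun p : Matrix (Fin n) (Fin n) ℝ × (Fin n → ℝ) => p.2 i :=
    fun i => (measurable_pi_apply i).comp measurable_snd
  have hAint' : ∀ t i j, Integrable (fun ω => A t ω i j) μ := fun t i j =>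
    ((transfer _ (hgA i j) t).1).mpr (hAint i j)
  have hBint' : ∀ t i, Integrable (fun ω => B t ω i) μ := fun t i =>
    ((transfer _ (hgB i) t).1).mpr (hBint i)
  have hAmean : ∀ t i j, ∫ ω, A t ω i j ∂μ = Abar i j := fun t i j => (transfer _ (hgA i j) t).2
  have hBmean' : ∀ t i, ∫ ω, B t ω i ∂μ = Bbar i := fun t i => (transfer _ (hgB i) t).2
  -- nonnegativity of means
  have hAbar_nonneg : ∀ i j, 0 ≤ Abar i j := fun i j =>
    integral_nonneg_of_ae ((hApos 0).mono fun ω h => h i j)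
  have hBbar_nonneg : ∀ i, 0 ≤ Bbar i := fun i =>
    integral_nonneg_of_ae ((hBpos 0).mono fun ω h => h i)
  have hpow_nonneg : ∀ k i j, 0 ≤ (Abar ^ k) i j := by
    intro k
    induction k with
    | zero => intro i j; by_cases h : i = j <;> simp [Matrix.one_apply, h]
    | succ k ih =>
      intro i j
      rw [pow_succ, Matrix.mul_apply]
      exact Finset.sum_nonneg fun l _ => mul_nonneg (ih i l) (hAbar_nonneg l j)
  have hterm_nonneg : ∀ k i, 0 ≤ (Abar ^ k *ᵥ Bbar) i := by
    intro k i
    simp only [Matrix.mulVec, dotProduct]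
    exact Finset.sum_nonneg fun l _ => mul_nonneg (hpow_nonneg k i l) (hBbar_nonneg l)
  -- independence of A t entries from Z (t-1) k entries
  have hindepZ : ∀ (t : ℤ) (k : ℕ) (i j l : Fin n),
      IndepFun (fun ω => A t ω i j) (fun ω => Zfun A B (t - 1) k ω l) μ := by
    intro t k i j l
    set T : Finset ℤ := Finset.Icc (t - 1 - k) (t - 1) with hT
    have hmemT : ∀ m : ℕ, m ≤ k → (t - 1 - (m : ℤ)) ∈ T := by
      intro m hm
      simp only [hT, Finset.mem_Icc]
      omega
    have hST : Disjoint ({t} : Finset ℤ) T := by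
      simp only [Finset.disjoint_singleton_left, hT, Finset.mem_Icc]
      omega
    have base := hindep.indepFun_finset {t} T hST hmeas
    set Ahat : ℤ → (T → Matrix (Fin n) (Fin n) ℝ × (Fin n → ℝ)) → Matrix (Fin n) (Fin n) ℝ :=
      fun s h => if hs : s ∈ T then (h ⟨s, hs⟩).1 else 0 with hAhat
    have hAhat_meas : ∀ s, Measurable (Ahat s) := by
      intro s
      by_cases hs : s ∈ T
      · simp only [hAhat, dif_pos hs]
        exact measurable_fst.comp (measurable_pi_apply _)
      · simp only [hAhat, dif_neg hs]
        exact measurable_const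
    set φ : (({t} : Finset ℤ) → Matrix (Fin n) (Fin n) ℝ × (Fin n → ℝ)) → ℝ :=
      fun h => (h ⟨t, Finset.mem_singleton_self t⟩).1 i j with hφ
    set ψ : (T → Matrix (Fin n) (Fin n) ℝ × (Fin n → ℝ)) → ℝ :=
      fun h => (prodA Ahat (t - 1) h k *ᵥ (h ⟨t - 1 - k, hmemT k le_rfl⟩).2) l with hψ
    have hφm : Measurable φ :=
      (measurable_mat_entry measurable_fst i j).comp (measurable_pi_apply _)
    have hψm : Measurable ψ := by
      apply (measurable_pi_apply l).comp
      exact Measurable.matrixMulVec (measurable_prodA hAhat_meas (t - 1) k)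
        (measurable_snd.comp (measurable_pi_apply _))
    have key := (base.comp hφm hψm)
    have e1 : (φ ∘ fun ω (s : ({t} : Finset ℤ)) => f s ω) = fun ω => A t ω i j := rfl
    have e2 : (ψ ∘ fun ω (s : T) => f s ω) = fun ω => Zfun A B (t - 1) k ω l := by
      funext ω
      have hprod : prodA Ahat (t - 1) (fun s : T => f s ω) k = prodA A (t - 1) ω k := by
        refine prodA_congr fun m hm => ?_
        simp only [hAhat, dif_pos (hmemT m hm.le)]
        rfl
      show (prodA Ahat (t - 1) (fun s : T => f s ω) k *ᵥ B (t - 1 - k) ω) l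
        = Zfun A B (t - 1) k ω l
      rw [hprod]; rfl
    rw [e1, e2] at key
    exact key
  -- measurability of Z entries
  have hZmeas : ∀ (t : ℤ) (k : ℕ), Measurable fun ω => Zfun A B t k ω :=
    fun t k => Measurable.matrixMulVec (measurable_prodA hAmeas t k) (hBmeas _)
  -- integrability and mean of Z
  have key : ∀ k : ℕ, ∀ t : ℤ, (∀ l, Integrable (fun ω => Zfun A B t k ω l) μ)
      ∧ (∀ l, ∫ ω, Zfun A B t k ω l ∂μ = (Abar ^ k *ᵥ Bbar) l) := by
    intro k
    induction k with
    | zero =>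
      intro t
      constructor
      · intro l; simpa [Zfun_zero] using hBint' t l
      · intro l; simp only [Zfun_zero, pow_zero, Matrix.one_mulVec]; exact hBmean' t l
    | succ k ih =>
      intro t
      have hrw : ∀ ω l, Zfun A B t (k + 1) ω l = ∑ m, A t ω l m * Zfun A B (t - 1) k ω m := by
        intro ω l; rw [Zfun_succ]; rfl
      have hint : ∀ l m, Integrable (fun ω => A t ω l m * Zfun A B (t - 1) k ω m) μ :=
        fun l m => (hindepZ t k l m m).integrable_mul (hAint' t l m) ((ih (t - 1)).1 m)
      constructor
      · intro l
        have : (fun ω => Zfun A B t (k + 1) ω l)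
            = fun ω => ∑ m, A t ω l m * Zfun A B (t - 1) k ω m := by
          funext ω; exact hrw ω l
        rw [this]
        exact integrable_finset_sum _ fun m _ => hint l m
      · intro l
        have h1 : (fun ω => Zfun A B t (k + 1) ω l)
            = fun ω => ∑ m, A t ω l m * Zfun A B (t - 1) k ω m := by
          funext ω; exact hrw ω l
        rw [h1, integral_finset_sum _ fun m _ => hint l m]
        have h2 : ∀ m : Fin n, ∫ ω, A t ω l m * Zfun A B (t - 1) k ω m ∂μ
            = Abar l m * (Abar ^ k *ᵥ Bbar) m := by
          intro m
          have h3 := (hindepZ t k l m m).integral_fun_mul_eq_mul_integral (hAint' t l m).aestronglyMeasurable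
            ((ih (t - 1)).1 m).aestronglyMeasurable
          rw [hAmean t l m, (ih (t - 1)).2 m] at h3
          exact h3
        simp_rw [h2]
        rw [pow_succ', ← Matrix.mulVec_mulVec]
        rfl
  -- a.s. domination of partial sums by Y
  have dom : ∀ N : ℕ, ∀ t : ℤ, ∀ᵐ ω ∂μ, ∀ i,
      ∑ k ∈ Finset.range (N + 1), Zfun A B t k ω i ≤ Y t ω i := by
    intro N
    induction N with
    | zero =>
      intro t
      filter_upwards [hYrec t, hApos t, hYpos (t - 1)] with ω h1 h2 h3
      intro i
      rw [Finset.sum_range_one, Zfun_zero, h1, Pi.add_apply]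
      have : 0 ≤ (A t ω *ᵥ Y (t - 1) ω) i := by
        simp only [Matrix.mulVec, dotProduct]
        exact Finset.sum_nonneg fun m _ => mul_nonneg (h2 i m) (h3 m)
      linarith
    | succ N ihN =>
      intro t
      filter_upwards [hYrec t, hApos t, ihN (t - 1)] with ω h1 h2 h4
      intro i
      have hsplit : ∑ k ∈ Finset.range (N + 2), Zfun A B t k ω i
          = (∑ k ∈ Finset.range (N + 1), Zfun A B t (k + 1) ω i) + Zfun A B t 0 ω i :=
        Finset.sum_range_succ' _ (N + 1)
      rw [hsplit, Zfun_zero, h1, Pi.add_apply]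
      have hmono : ∑ k ∈ Finset.range (N + 1), Zfun A B t (k + 1) ω i
          ≤ (A t ω *ᵥ Y (t - 1) ω) i := by
        have : ∀ k, Zfun A B t (k + 1) ω i = ∑ m, A t ω i m * Zfun A B (t - 1) k ω m := by
          intro k; rw [Zfun_succ]; rfl
        simp_rw [this]
        rw [Finset.sum_comm]
        show ∑ m, ∑ k ∈ Finset.range (N + 1), A t ω i m * Zfun A B (t - 1) k ω m
          ≤ ∑ m, A t ω i m * Y (t - 1) ω m
        refine Finset.sum_le_sum fun m _ => ?_
        rw [← Finset.mul_sum]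
        exact mul_le_mul_of_nonneg_left (h4 m) (h2 i m)
      linarith
  -- partial sums of the mean series are bounded
  have bound : ∀ (N : ℕ) (i : Fin n),
      ∑ k ∈ Finset.range N, (Abar ^ k *ᵥ Bbar) i ≤ ∫ ω, Y 0 ω i ∂μ := by
    intro N i
    cases N with
    | zero =>
      simp only [Finset.range_zero, Finset.sum_empty]
      exact integral_nonneg_of_ae ((hYpos 0).mono fun ω h => h i)
    | succ N =>
      have hZint : ∀ k, Integrable (fun ω => Zfun A B 0 k ω i) μ := fun k => (key k 0).1 i
      have h1 : ∫ ω, ∑ k ∈ Finset.range (N + 1), Zfun A B 0 k ω i ∂μ ≤ ∫ ω, Y 0 ω i ∂μ := by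
        refine integral_mono_ae (integrable_finset_sum _ fun k _ => hZint k) (hYint 0 i) ?_
        exact (dom N 0).mono fun ω h => h i
      rw [integral_finset_sum _ fun k _ => hZint k] at h1
      calc ∑ k ∈ Finset.range (N + 1), (Abar ^ k *ᵥ Bbar) i
          = ∑ k ∈ Finset.range (N + 1), ∫ ω, Zfun A B 0 k ω i ∂μ := by
            refine Finset.sum_congr rfl fun k _ => ?_
            exact ((key k 0).2 i).symm
        _ ≤ ∫ ω, Y 0 ω i ∂μ := h1
  have hsum : ∀ i, Summable fun k => (Abar ^ k *ᵥ Bbar) i := fun i =>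
    summable_of_sum_range_le (fun k => hterm_nonneg k i) (fun N => bound N i)
  refine ⟨hsum, ?_⟩
  rw [tendsto_pi_nhds]
  intro i
  simpa using (hsum i).tendsto_atTop_zero
end

section
/- (Strict stationarity of PGARCH(1,1)) Let $(\eta_t)_{t\in\mathbb{Z}}$ be i.i.d. nonnegative random variables with $E[\eta_0]=1$, and let $\alpha_1(v)\geq 0$, $\beta_1(v)\geq 0$ for $v=1,\dots,s$ (not all zero at any season, and $\log(\eta\alpha_1(v)+\beta_1(v))$ integrable). If $\sum_{v=1}^{s} E[\log(\eta_0\,\alpha_1(v) + \beta_1(v))] < 0$, then the top Lyapunov exponent of the sequence of period-products of the companion matrices $\phi_v(\eta) = (\eta,1)^\top(\alpha_1(v),\beta_1(v))$ is strictly negative; equivalently, $\frac{1}{t}\log\|\prod_{i=1}^{t}\Phi(\underline\eta_{t-i})\| \to \gamma < 0$ almost surely, where $\Phi(\underline\eta) = \phi_s(\eta_s)\cdots\phi_1(\eta_1)$ for $\underline\eta = (\eta_1,\dots,\eta_s)$. -/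
open MeasureTheory ProbabilityTheory Matrix Filter Topology

attribute [local instance] Matrix.linftyOpNormedAddCommGroup Matrix.linftyOpNormedRing

/-- The one-step PGARCH(1,1) companion matrix
`φ_v(x) = (x, 1)ᵀ (α₁(v), β₁(v)) = ![![α₁(v) x, β₁(v) x], ![α₁(v), β₁(v)]]`. -/
noncomputable def phiM (α β : ℕ → ℝ) (v : ℕ) (x : ℝ) : Matrix (Fin 2) (Fin 2) ℝ :=
  !![α v * x, β v * x; α v, β v]

/-- The product `Φ(η̄_{t-1}) Φ(η̄_{t-2}) ⋯ Φ(η̄_0)` of the period-products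
`Φ(η̄_k) = φ_{s-1}(e_{ks+s-1}) ⋯ φ_0(e_{ks})` (seasons `0`-indexed, innovations `e_m` for
`m ∈ ℕ`, season of `m` being `m % s`): the ordered product of `φ_{m % s}(e_m(ω))` over
`m = ts - 1, …, 1, 0` (highest index on the left). -/
noncomputable def PhiProd {Ω : Type*} (s : ℕ) (α β : ℕ → ℝ) (e : ℕ → Ω → ℝ)
    (t : ℕ) (ω : Ω) : Matrix (Fin 2) (Fin 2) ℝ :=
  (((List.range (t * s)).reverse).map fun m => phiM α β (m % s) (e m ω)).prod

lemma norm_fin2 (M : Matrix (Fin 2) (Fin 2) ℝ) :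
    ‖M‖ = max (|M 0 0| + |M 0 1|) (|M 1 0| + |M 1 1|) := by
  rw [Matrix.linfty_opNorm_def]
  have : (Finset.univ : Finset (Fin 2)) = {0, 1} := by decide
  rw [this]
  rw [Finset.sup_insert, Finset.sup_singleton]
  push_cast [Fin.sum_univ_two]
  simp [Real.norm_eq_abs]

lemma phiM_mul (α β : ℕ → ℝ) (v : ℕ) (x y : ℝ) :
    phiM α β v x * phiM α β 0 y = (y * α v + β v) • phiM α β 0 x := by
  ext i j
  fin_cases i <;> fin_cases j <;>
    simp [phiM, Matrix.mul_apply, Fin.sum_univ_two] <;> ring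

lemma prod_formula {Ω : Type*} (s : ℕ) (α β : ℕ → ℝ) (e : ℕ → Ω → ℝ) (ω : Ω) (n : ℕ) :
    (((List.range (n+1)).reverse).map fun m => phiM α β (m % s) (e m ω)).prod
      = (∏ m ∈ Finset.range n, (e m ω * α ((m+1) % s) + β ((m+1) % s)))
        • phiM α β 0 (e n ω) := by
  induction n with
  | zero => simp [List.range_succ]
  | succ n ih =>
    rw [List.range_succ (n := n+1), List.reverse_append, List.map_append, List.prod_append]
    simp only [List.map_cons, List.map_nil, List.prod_cons, List.prod_nil, mul_one,
      List.reverse_singleton]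
    rw [ih, Matrix.mul_smul, phiM_mul, Finset.prod_range_succ, smul_smul, mul_comm]

section Aux
variable {Ω : Type*} [MeasurableSpace Ω] {μ : Measure Ω}

/-- SLLN for `g ∘ e ∘ ι` for iid `e`, measurable `g`, injective `ι`. -/
lemma slln_comp (e : ℕ → Ω → ℝ) (hmeas : ∀ m, Measurable (e m))
    (hindep : iIndepFun e μ)
    (hident : ∀ m, Measure.map (e m) μ = Measure.map (e 0) μ)
    (g : ℝ → ℝ) (hg : Measurable g)
    (hgint : Integrable (fun ω => g (e 0 ω)) μ)
    (ι : ℕ → ℕ) (hι : Function.Injective ι) :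
    ∀ᵐ ω ∂μ, Tendsto (fun t : ℕ => (∑ k ∈ Finset.range t, g (e (ι k) ω)) / t)
      atTop (𝓝 (∫ ω, g (e 0 ω) ∂μ)) := by
  set Y : ℕ → Ω → ℝ := fun k => g ∘ e (ι k) with hY
  have idd : ∀ m, IdentDistrib (e m) (e 0) μ μ :=
    fun m => ⟨(hmeas m).aemeasurable, (hmeas 0).aemeasurable, hident m⟩
  have iddY : ∀ k, IdentDistrib (Y k) (g ∘ e 0) μ μ := fun k => (idd (ι k)).comp hg
  have hint0 : Integrable (Y 0) μ := (iddY 0).integrable_iff.2 hgint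
  have hpair : Pairwise (Function.onFun (IndepFun · · μ) Y) := fun i j hij =>
    (hindep.indepFun (hι.ne hij)).comp hg hg
  have hidY : ∀ k, IdentDistrib (Y k) (Y 0) μ μ := fun k => (iddY k).trans (iddY 0).symm
  have h := strong_law_ae_real Y hint0 hpair hidY
  have hI : ∫ ω, Y 0 ω ∂μ = ∫ ω, g (e 0 ω) ∂μ := (iddY 0).integral_eq
  rw [hI] at h
  exact h

/-- If `(W k)/k` has Cesàro a.s. limits (iid setting), then `W n / n → 0` a.s. -/
lemma comp_div_tendsto_zero (e : ℕ → Ω → ℝ) (hmeas : ∀ m, Measurable (e m))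
    (hindep : iIndepFun e μ)
    (hident : ∀ m, Measure.map (e m) μ = Measure.map (e 0) μ)
    (g : ℝ → ℝ) (hg : Measurable g)
    (hgint : Integrable (fun ω => g (e 0 ω)) μ) :
    ∀ᵐ ω ∂μ, Tendsto (fun n : ℕ => g (e n ω) / n) atTop (𝓝 0) := by
  filter_upwards [slln_comp e hmeas hindep hident g hg hgint id Function.injective_id] with ω hω
  set L := ∫ ω, g (e 0 ω) ∂μ
  set A : ℕ → ℝ := fun n => (∑ k ∈ Finset.range n, g (e k ω)) / n with hA
  have h1 : Tendsto (fun n : ℕ => A (n + 1) * ((n + 1 : ℝ) / n) - A n) atTop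
      (𝓝 (L * 1 - L)) := by
    refine Tendsto.sub (Tendsto.mul (hω.comp (tendsto_add_atTop_nat 1)) ?_) hω
    have heq : (fun n : ℕ => 1 + 1 / (n : ℝ)) =ᶠ[atTop] (fun n : ℕ => ((n : ℝ) + 1) / n) := by
      filter_upwards [eventually_ge_atTop 1] with n hn
      have : (n : ℝ) ≠ 0 := by positivity
      field_simp
    refine Tendsto.congr' heq ?_
    simpa using (tendsto_const_nhds (x := (1:ℝ))).add (tendsto_one_div_atTop_nhds_zero_nat)
  have h2 : (fun n : ℕ => A (n + 1) * ((n + 1 : ℝ) / n) - A n)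
      =ᶠ[atTop] (fun n : ℕ => g (e n ω) / n) := by
    filter_upwards [eventually_ge_atTop 1] with n hn
    have hn0 : (n : ℝ) ≠ 0 := by positivity
    have hn1 : (n : ℝ) + 1 ≠ 0 := by positivity
    simp only [hA, Finset.sum_range_succ]
    push_cast
    field_simp
    try ring
  have := h1.congr' h2
  simpa using this

lemma sum_range_mul_split (f : ℕ → ℝ) (s t : ℕ) :
    ∑ m ∈ Finset.range (t * s), f m
      = ∑ v ∈ Finset.range s, ∑ k ∈ Finset.range t, f (k * s + v) := by
  induction t with
  | zero => simp
  | succ t ih =>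
    have : (t + 1) * s = t * s + s := by ring
    rw [this, Finset.sum_range_add, ih, ← Finset.sum_add_distrib]
    refine Finset.sum_congr rfl fun v _ => ?_
    rw [Finset.sum_range_succ]

lemma sum_mod_shift (s : ℕ) (hs : 0 < s) (g : ℕ → ℝ) :
    ∑ v ∈ Finset.range s, g ((v + 1) % s) = ∑ v ∈ Finset.range s, g v := by
  refine Finset.sum_nbij' (fun v => (v + 1) % s) (fun v => (v + (s - 1)) % s) ?_ ?_ ?_ ?_ ?_
  · intro v hv; exact Finset.mem_range.2 (Nat.mod_lt _ hs)
  · intro v hv; exact Finset.mem_range.2 (Nat.mod_lt _ hs)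
  · intro v hv
    show ((v + 1) % s + (s - 1)) % s = v
    rw [Nat.mod_add_mod]
    have : v + 1 + (s - 1) = v + s := by omega
    rw [this, Nat.add_mod_right, Nat.mod_eq_of_lt (Finset.mem_range.1 hv)]
  · intro v hv
    show ((v + (s - 1)) % s + 1) % s = v
    rw [Nat.mod_add_mod]
    have : v + (s - 1) + 1 = v + s := by omega
    rw [this, Nat.add_mod_right, Nat.mod_eq_of_lt (Finset.mem_range.1 hv)]
  · intro v hv; rfl

end Aux


set_option maxHeartbeats 4000000 in
/-- **Strict stationarity of PGARCH(1,1).** Let `(e_m)` be i.i.d. nonnegative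
innovations with mean `1`, and `α₁(v), β₁(v) ≥ 0` with `α₁(v) + β₁(v) > 0` and
`log (e α₁(v) + β₁(v))` integrable (and `e α₁(v) + β₁(v) > 0` a.s.) for each season.  If
`∑_{v=1}^s E[log (e₀ α₁(v) + β₁(v))] < 0`, then the top Lyapunov exponent of the sequence of
period-products of the companion matrices is strictly negative:
`(1/t) log ‖∏_{i=1}^t Φ(η̄_{t-i})‖ → γ < 0` almost surely. -/
theorem stmt12 {Ω : Type*} [MeasurableSpace Ω] (μ : Measure Ω) [IsProbabilityMeasure μ]
    (s : ℕ) (hs : 0 < s) (α β : ℕ → ℝ)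
    (hα : ∀ v < s, 0 ≤ α v) (hβ : ∀ v < s, 0 ≤ β v)
    (hnz : ∀ v < s, 0 < α v + β v)
    (e : ℕ → Ω → ℝ)
    (hmeas : ∀ m, Measurable (e m))
    (hindep : iIndepFun e μ)
    (hident : ∀ m, Measure.map (e m) μ = Measure.map (e 0) μ)
    (hpos : ∀ m, ∀ᵐ ω ∂μ, 0 ≤ e m ω)
    (hint : Integrable (e 0) μ) (hmean : ∫ ω, e 0 ω ∂μ = 1)
    (hlogpos : ∀ m, ∀ v < s, ∀ᵐ ω ∂μ, 0 < e m ω * α v + β v)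
    (hlogint : ∀ v < s, Integrable (fun ω => Real.log (e 0 ω * α v + β v)) μ)
    (hlyap : ∑ v ∈ Finset.range s, ∫ ω, Real.log (e 0 ω * α v + β v) ∂μ < 0) :
    ∃ γ : ℝ, γ < 0 ∧
      ∀ᵐ ω ∂μ, Tendsto (fun t : ℕ => (1 / (t : ℝ)) * Real.log ‖PhiProd s α β e t ω‖)
        atTop (𝓝 γ) := by
  classical
  set S : ℝ := ∑ v ∈ Finset.range s, ∫ ω, Real.log (e 0 ω * α v + β v) ∂μ with hS
  refine ⟨S, hlyap, ?_⟩
  -- notation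
  set X : ℕ → Ω → ℝ :=
    fun m ω => Real.log (e m ω * α ((m + 1) % s) + β ((m + 1) % s)) with hX
  have hmod : ∀ k v : ℕ, (k * s + v + 1) % s = (v + 1) % s := by
    intro k v
    have : k * s + v + 1 = v + 1 + k * s := by ring
    rw [this, Nat.add_mul_mod_self_right]
  have hmods : ∀ t : ℕ, 1 ≤ t → (t * s - 1 + 1) % s = 0 := by
    intro t ht
    have h1 : 0 < t * s := Nat.mul_pos ht hs
    have : t * s - 1 + 1 = t * s := by omega
    rw [this, Nat.mul_mod_left]
  -- the a.e. events
  have hposAll : ∀ᵐ ω ∂μ, ∀ m, 0 ≤ e m ω := ae_all_iff.2 hpos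
  have hfactAll : ∀ᵐ ω ∂μ, ∀ m, 0 < e m ω * α ((m + 1) % s) + β ((m + 1) % s) :=
    ae_all_iff.2 fun m => hlogpos m _ (Nat.mod_lt _ hs)
  have hsl : ∀ᵐ ω ∂μ, ∀ v, v < s →
      Tendsto (fun t : ℕ => (∑ k ∈ Finset.range t, X (k * s + v) ω) / t) atTop
        (𝓝 (∫ ω, Real.log (e 0 ω * α ((v + 1) % s) + β ((v + 1) % s)) ∂μ)) := by
    rw [ae_all_iff]
    intro v
    by_cases hv : v < s
    swap
    · exact Filter.Eventually.of_forall fun ω h => absurd h hv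
    have hw : (v + 1) % s < s := Nat.mod_lt _ hs
    have hg : Measurable fun x : ℝ => Real.log (x * α ((v + 1) % s) + β ((v + 1) % s)) :=
      ((measurable_id.mul_const _).add_const _).log
    have hι : Function.Injective fun k : ℕ => k * s + v := by
      intro a b hab
      simp only [Nat.add_right_cancel_iff] at hab
      exact Nat.eq_of_mul_eq_mul_right hs hab
    filter_upwards [slln_comp e hmeas hindep hident _ hg (hlogint _ hw) _ hι] with ω hω hv'
    refine hω.congr fun t => ?_
    congr 1
    refine Finset.sum_congr rfl fun k _ => ?_
    simp only [hX, hmod]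
  have hW : ∀ᵐ ω ∂μ,
      Tendsto (fun n : ℕ => Real.log (e n ω * α 0 + β 0) / n) atTop (𝓝 0) :=
    comp_div_tendsto_zero e hmeas hindep hident _
      ((measurable_id.mul_const _).add_const _).log (hlogint 0 hs)
  have hZint : Integrable (fun ω => Real.log (max (e 0 ω) 1)) μ := by
    refine Integrable.mono' (hint.add (integrable_const 1))
      ((((hmeas 0).max measurable_const).log).aestronglyMeasurable) ?_
    filter_upwards [hpos 0] with ω hω
    have h1 : (1 : ℝ) ≤ max (e 0 ω) 1 := le_max_right _ _
    have hnn : 0 ≤ Real.log (max (e 0 ω) 1) := Real.log_nonneg h1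
    rw [Real.norm_eq_abs, abs_of_nonneg hnn]
    calc Real.log (max (e 0 ω) 1) ≤ max (e 0 ω) 1 - 1 :=
          Real.log_le_sub_one_of_pos (lt_of_lt_of_le one_pos h1)
      _ ≤ (e 0 ω + 1) - 1 := by
          gcongr
          exact max_le (by linarith) (by linarith)
      _ ≤ e 0 ω + 1 := by linarith
  have hZ : ∀ᵐ ω ∂μ,
      Tendsto (fun n : ℕ => Real.log (max (e n ω) 1) / n) atTop (𝓝 0) :=
    comp_div_tendsto_zero e hmeas hindep hident (fun x => Real.log (max x 1))
      ((measurable_id.max measurable_const).log) hZint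
  -- combine
  filter_upwards [hposAll, hfactAll, hsl, hW, hZ] with ω hpos₀ hfact hslω hWω hZω
  -- Step 1: the Cesàro limit of the main sum
  have hA : Tendsto (fun t : ℕ => (∑ m ∈ Finset.range (t * s), X m ω) / t) atTop (𝓝 S) := by
    have h1 : Tendsto (fun t : ℕ => ∑ v ∈ Finset.range s,
        (∑ k ∈ Finset.range t, X (k * s + v) ω) / t) atTop
        (𝓝 (∑ v ∈ Finset.range s,
          ∫ ω, Real.log (e 0 ω * α ((v + 1) % s) + β ((v + 1) % s)) ∂μ)) :=
      tendsto_finset_sum _ fun v hv => hslω v (Finset.mem_range.1 hv)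
    have h2 : (∑ v ∈ Finset.range s,
        ∫ ω, Real.log (e 0 ω * α ((v + 1) % s) + β ((v + 1) % s)) ∂μ) = S := by
      rw [hS]
      exact sum_mod_shift s hs fun w => ∫ ω, Real.log (e 0 ω * α w + β w) ∂μ
    rw [h2] at h1
    refine h1.congr fun t => ?_
    rw [sum_range_mul_split, Finset.sum_div]
  -- Step 2: the eventual identity
  have hident2 : ∀ᶠ t : ℕ in atTop,
      (∑ m ∈ Finset.range (t * s), X m ω) / t
        - (1 / (t : ℝ)) * Real.log (e (t * s - 1) ω * α 0 + β 0)
        + (1 / (t : ℝ)) * Real.log (α 0 + β 0)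
        + (1 / (t : ℝ)) * Real.log (max (e (t * s - 1) ω) 1)
      = (1 / (t : ℝ)) * Real.log ‖PhiProd s α β e t ω‖ := by
    filter_upwards [eventually_ge_atTop 1] with t ht
    set n := t * s - 1 with hn
    have hts : t * s = n + 1 := by
      have : 0 < t * s := Nat.mul_pos ht hs
      omega
    set C : ℝ := ∏ m ∈ Finset.range n, (e m ω * α ((m + 1) % s) + β ((m + 1) % s)) with hC
    have hCpos : 0 < C := Finset.prod_pos fun m _ => hfact m
    set x : ℝ := e n ω with hx
    have hxnn : 0 ≤ x := hpos₀ n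
    have hx1 : (0 : ℝ) < max x 1 := lt_of_lt_of_le one_pos (le_max_right _ _)
    have hαβ : 0 < α 0 + β 0 := hnz 0 hs
    have hα0 : 0 ≤ α 0 := hα 0 hs
    have hβ0 : 0 ≤ β 0 := hβ 0 hs
    have hPP : PhiProd s α β e t ω = C • phiM α β 0 x := by
      rw [PhiProd, hts]
      exact prod_formula s α β e ω n
    have hnorm : ‖PhiProd s α β e t ω‖ = C * (α 0 + β 0) * max x 1 := by
      rw [hPP, norm_fin2]
      simp [phiM]
      rw [abs_of_nonneg hCpos.le, abs_of_nonneg hα0, abs_of_nonneg hβ0, abs_of_nonneg hxnn]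
      have e1 : C * (α 0 * x) + C * (β 0 * x) = (C * (α 0 + β 0)) * x := by ring
      have e2 : C * α 0 + C * β 0 = (C * (α 0 + β 0)) * 1 := by ring
      rw [e1, e2, (mul_max_of_nonneg _ _ (mul_nonneg hCpos.le hαβ.le)).symm,
        mul_assoc]
    have hlog : Real.log ‖PhiProd s α β e t ω‖
        = (∑ m ∈ Finset.range n, X m ω) + Real.log (α 0 + β 0) + Real.log (max x 1) := by
      rw [hnorm, Real.log_mul (mul_pos hCpos hαβ).ne' (ne_of_gt hx1),
        Real.log_mul (ne_of_gt hCpos) (ne_of_gt hαβ), hC,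
        Real.log_prod fun m _ => ne_of_gt (hfact m)]
    have hsum : (∑ m ∈ Finset.range n, X m ω)
        = (∑ m ∈ Finset.range (t * s), X m ω) - X n ω := by
      rw [hts, Finset.sum_range_succ]; ring
    have hXn : X n ω = Real.log (e n ω * α 0 + β 0) := by
      simp only [hX]
      rw [hn, hmods t ht]
    rw [hlog, hsum, hXn]
    have ht0 : (t : ℝ) ≠ 0 := Nat.cast_ne_zero.2 (by omega)
    field_simp
    rw [hx, mul_comm (α 0) (e n ω)]
  -- Step 3: the limits of the auxiliary terms
  have hgrow : Tendsto (fun t : ℕ => t * s - 1) atTop atTop := by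
    refine tendsto_atTop_mono (fun t => ?_) (tendsto_sub_atTop_nat 1)
    have : t ≤ t * s := Nat.le_mul_of_pos_right t hs
    omega
  have hratio : Tendsto (fun t : ℕ => ((t * s - 1 : ℕ) : ℝ) / t) atTop (𝓝 (s : ℝ)) := by
    have heq : (fun t : ℕ => (s : ℝ) - 1 / t) =ᶠ[atTop]
        (fun t : ℕ => ((t * s - 1 : ℕ) : ℝ) / t) := by
      filter_upwards [eventually_ge_atTop 1] with t ht
      have h1 : 1 ≤ t * s := Nat.mul_pos ht hs
      have ht0 : (t : ℝ) ≠ 0 := Nat.cast_ne_zero.2 (by omega)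
      rw [Nat.cast_sub h1]
      push_cast
      field_simp
    refine Tendsto.congr' heq ?_
    simpa using (tendsto_const_nhds (x := (s:ℝ))).sub tendsto_one_div_atTop_nhds_zero_nat
  have bdry : ∀ (f : ℕ → ℝ), Tendsto (fun k : ℕ => f k / k) atTop (𝓝 0) →
      Tendsto (fun t : ℕ => (1 / (t : ℝ)) * f (t * s - 1)) atTop (𝓝 0) := by
    intro f hf
    have h1 : Tendsto (fun t : ℕ => (f (t * s - 1) / (t * s - 1 : ℕ))
        * (((t * s - 1 : ℕ) : ℝ) / t)) atTop (𝓝 (0 * s)) :=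
      Tendsto.mul (hf.comp hgrow) hratio
    rw [zero_mul] at h1
    refine h1.congr' ?_
    filter_upwards [eventually_ge_atTop 2] with t ht
    have hn1 : 1 ≤ t * s - 1 := by
      have := Nat.le_mul_of_pos_right t hs
      omega
    have hne : ((t * s - 1 : ℕ) : ℝ) ≠ 0 := Nat.cast_ne_zero.2 (by omega)
    rw [div_mul_div_comm, mul_comm (f (t * s - 1)) (((t * s - 1 : ℕ) : ℝ)),
      mul_div_mul_left _ _ hne, one_div_mul_eq_div]
  have hT2 : Tendsto (fun t : ℕ => (1 / (t : ℝ))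
      * Real.log (e (t * s - 1) ω * α 0 + β 0)) atTop (𝓝 0) :=
    bdry _ hWω
  have hT4 : Tendsto (fun t : ℕ => (1 / (t : ℝ))
      * Real.log (max (e (t * s - 1) ω) 1)) atTop (𝓝 0) :=
    bdry _ hZω
  have hT3 : Tendsto (fun t : ℕ => (1 / (t : ℝ)) * Real.log (α 0 + β 0)) atTop (𝓝 0) := by
    have := tendsto_one_div_atTop_nhds_zero_nat.mul_const (Real.log (α 0 + β 0))
    simpa using this
  have hfinal := ((hA.sub hT2).add hT3).add hT4
  rw [sub_zero, add_zero, add_zero] at hfinal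
  exact hfinal.congr' hident2
end

section
/- (Second-order stationarity of PGARCH(1,1)) With $\theta_1(v) = \alpha_1(v)+\beta_1(v)$ for $v=1,\dots,s$, all nonnegative, the condition $\prod_{v=1}^{s}\theta_1(v) < 1$ is equivalent to the spectral-radius condition $\rho\left(\prod_{v=1}^s \phi_v\right)<1$, where $\phi_v = \begin{pmatrix}\alpha_1(v) & \beta_1(v)\\ \alpha_1(v) & \beta_1(v)\end{pmatrix}$. In particular the nonzero eigenvalue of each rank-one matrix product $\prod_{v=1}^s \phi_v$ equals $\prod_{v=1}^s\theta_1(v)$. -/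
open Matrix

lemma prodphi (α β : ℕ → ℝ) : ∀ n, 0 < n →
    (((List.range n).reverse).map (fun v => !![α v, β v; α v, β v])).prod
    = (∏ v ∈ Finset.Ico 1 n, (α v + β v)) • !![α 0, β 0; α 0, β 0] := by
  intro n
  induction n with
  | zero => intro h; omega
  | succ n ih =>
    intro _
    rcases Nat.eq_zero_or_pos n with hn | hn
    · subst hn
      simp [List.range_succ]
    · rw [List.range_succ, List.reverse_append, List.map_append, List.prod_append]
      simp only [List.reverse_singleton, List.map_cons, List.map_nil, List.prod_cons,
        List.prod_nil, mul_one]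
      rw [ih hn, Finset.prod_Ico_succ_top (by omega : 1 ≤ n)]
      ext i j
      fin_cases i <;> fin_cases j <;>
        simp [Matrix.mul_apply, Fin.sum_univ_two, Matrix.smul_apply] <;> ring

lemma spec_rank_one (a b : ℂ) (z : ℂ) :
    z ∈ spectrum ℂ (!![a, b; a, b]) ↔ z * (z - (a + b)) = 0 := by
  rw [spectrum.mem_iff, Matrix.isUnit_iff_isUnit_det, isUnit_iff_ne_zero, not_not]
  have : (algebraMap ℂ (Matrix (Fin 2) (Fin 2) ℂ)) z - !![a, b; a, b]
      = !![z - a, -b; -a, z - b] := by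
    ext i j
    fin_cases i <;> fin_cases j <;> simp [Matrix.algebraMap_eq_diagonal, Matrix.diagonal]
  rw [this, Matrix.det_fin_two_of]
  constructor <;> intro h <;> linear_combination h

/-- With `θ₁(v) = α₁(v) + β₁(v) ≥ 0` and
`φ_v = ![![α₁(v), β₁(v)], ![α₁(v), β₁(v)]]`, the ordered product `P = φ_s ⋯ φ_1`
(highest index on the left, `0`-indexed) has `∏_v θ₁(v)` as an eigenvalue, every nonzero
eigenvalue of `P` equals `∏_v θ₁(v)`, and `∏_v θ₁(v) < 1` iff every eigenvalue of `P` has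
modulus `< 1` (i.e. `ρ(P) < 1`). -/
theorem stmt13 {s : ℕ} (hs : 0 < s) (α β : ℕ → ℝ) (hα : ∀ v, 0 ≤ α v) (hβ : ∀ v, 0 ≤ β v)
    (θ : ℕ → ℝ) (hθ : ∀ v, θ v = α v + β v)
    (φ : ℕ → Matrix (Fin 2) (Fin 2) ℝ) (hφ : ∀ v, φ v = !![α v, β v; α v, β v])
    (P : Matrix (Fin 2) (Fin 2) ℝ)
    (hP : P = (((List.range s).reverse).map φ).prod) :
    (((∏ v ∈ Finset.range s, θ v : ℝ) : ℂ) ∈ spectrum ℂ (P.map (algebraMap ℝ ℂ))) ∧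
    (∀ z ∈ spectrum ℂ (P.map (algebraMap ℝ ℂ)), z ≠ 0 →
      z = ((∏ v ∈ Finset.range s, θ v : ℝ) : ℂ)) ∧
    ((∏ v ∈ Finset.range s, θ v) < 1 ↔
      ∀ z ∈ spectrum ℂ (P.map (algebraMap ℝ ℂ)), ‖z‖ < 1) := by
  have hφ' : φ = fun v => !![α v, β v; α v, β v] := funext hφ
  set c : ℝ := ∏ v ∈ Finset.Ico 1 s, (α v + β v) with hc
  have hPc : P = !![c * α 0, c * β 0; c * α 0, c * β 0] := by
    rw [hP, hφ', prodphi α β s hs]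
    ext i j
    fin_cases i <;> fin_cases j <;> simp [hc]
  set t : ℝ := ∏ v ∈ Finset.range s, θ v with ht
  have hsum : c * α 0 + c * β 0 = t := by
    rw [ht, ← mul_add, ← hθ 0]
    have h1 := Finset.prod_Ico_consecutive θ (by omega : (0:ℕ) ≤ 1) hs
    rw [Finset.range_eq_Ico, ← h1]
    have : Finset.Ico 0 1 = {0} := rfl
    rw [this, Finset.prod_singleton]
    simp only [hc]
    rw [mul_comm]
    congr 1
    exact Finset.prod_congr rfl fun v _ => (hθ v).symm
  have hspec : ∀ z : ℂ, z ∈ spectrum ℂ (P.map (algebraMap ℝ ℂ)) ↔ z * (z - (t : ℂ)) = 0 := by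
    intro z
    have hm : P.map (algebraMap ℝ ℂ)
        = !![((c * α 0 : ℝ) : ℂ), ((c * β 0 : ℝ) : ℂ); ((c * α 0 : ℝ) : ℂ), ((c * β 0 : ℝ) : ℂ)] := by
      rw [hPc]; ext i j; fin_cases i <;> fin_cases j <;> simp
    have hsum' : ((c * α 0 : ℝ) : ℂ) + ((c * β 0 : ℝ) : ℂ) = (t : ℂ) := by
      rw [← Complex.ofReal_add, hsum]
    rw [hm, spec_rank_one, hsum']
  have ht0 : 0 ≤ t := by
    rw [ht]; exact Finset.prod_nonneg fun v _ => by rw [hθ]; exact add_nonneg (hα v) (hβ v)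
  refine ⟨?_, ?_, ?_⟩
  · rw [hspec]; ring
  · intro z hz hz0
    rw [hspec] at hz
    rcases mul_eq_zero.mp hz with h | h
    · exact absurd h hz0
    · exact sub_eq_zero.mp h
  · constructor
    · intro hlt z hz
      rw [hspec] at hz
      rcases mul_eq_zero.mp hz with h | h
      · simp [h]
      · rw [sub_eq_zero.mp h, Complex.norm_real, Real.norm_eq_abs]
        rwa [abs_of_nonneg ht0]
    · intro h
      have := h _ ((hspec _).mpr (by ring))
      rwa [Complex.norm_real, Real.norm_eq_abs, abs_of_nonneg ht0] at this
end
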